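/- Let $\eta_0, \dots, \eta_n > 0$ and $C_0, \dots, C_n$ symmetric positive definite operators on a finite-dimensional real inner product space $W$, each satisfying $c_* \|ξ\|^2 \leq \langle C_i ξ, ξ\rangle$ and $\|C_i\| \leq c^*$ for constants $0 < c_* \leq c^*$. Then there exists a constant $c > 0$, depending only on $n, c_*, c^*, \eta_0, \dots, \eta_n$, such that $\langle -\mathcal{C} L_b \, Y, Y \rangle \geq c \|Y\|^2$ for all $Y \in W^{n+1}$. -/
import Mathlib
open scoped RealInnerProductSpace

lemma aux_op_lb {W : Type*} [NormedAddCommGroup W] [InnerProductSpace ℝ W]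
    (T : W →L[ℝ] W) (cs : ℝ) (hcs : 0 < cs)
    (h : ∀ ξ : W, cs * ‖ξ‖ ^ 2 ≤ ⟪T ξ, ξ⟫) (ξ : W) :
    cs ^ 2 * ‖ξ‖ ^ 2 ≤ ‖T ξ‖ ^ 2 := by
  rcases eq_or_ne ξ 0 with rfl | hne
  · simp
  · have h1 := h ξ
    have h2 := real_inner_le_norm (T ξ) ξ
    have h3 : 0 < ‖ξ‖ := norm_pos_iff.2 hne
    have h4 : cs * ‖ξ‖ * ‖ξ‖ ≤ ‖T ξ‖ * ‖ξ‖ := by nlinarith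
    have h5 : cs * ‖ξ‖ ≤ ‖T ξ‖ := le_of_mul_le_mul_right h4 h3
    nlinarith [mul_le_mul h5 h5 (by positivity) (norm_nonneg (T ξ))]

lemma aux_sub_lb {W : Type*} [NormedAddCommGroup W] [InnerProductSpace ℝ W]
    (x y : W) (d : ℝ) (hd : 0 < d) :
    ‖y‖ ^ 2 / (1 + d) - ‖x‖ ^ 2 / d ≤ ‖x - y‖ ^ 2 := by
  have tri : ‖y‖ ≤ ‖x‖ + ‖x - y‖ := by
    calc ‖y‖ = ‖x - (x - y)‖ := by rw [sub_sub_cancel]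
    _ ≤ ‖x‖ + ‖x - y‖ := norm_sub_le _ _
  have h1 : (0:ℝ) < 1 + d := by linarith
  rw [div_sub_div _ _ h1.ne' hd.ne', div_le_iff₀ (by positivity)]
  nlinarith [sq_nonneg (d * ‖x - y‖ - ‖x‖), mul_le_mul tri tri (norm_nonneg y) (by positivity),
    norm_nonneg (x - y), norm_nonneg x, norm_nonneg y]

/-- Coercivity of the extended Burgers quadratic form: there is `c > 0` with
`⟨-𝒞 L_b Y, Y⟩ ≥ c ‖Y‖²` for all `Y = (ψ, φ) ∈ W^{n+1}`. -/
theorem stmt_8 {W : Type*} [NormedAddCommGroup W] [InnerProductSpace ℝ W]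
    [FiniteDimensional ℝ W] (n : ℕ)
    (η0 : ℝ) (η : Fin n → ℝ) (hη0 : 0 < η0) (hη : ∀ i, 0 < η i)
    (cs cS : ℝ) (hcs : 0 < cs) (hcsS : cs ≤ cS)
    (C0 : W →L[ℝ] W) (C : Fin n → W →L[ℝ] W)
    (hC0sym : ∀ x y : W, ⟪C0 x, y⟫ = ⟪x, C0 y⟫)
    (hCsym : ∀ i, ∀ x y : W, ⟪C i x, y⟫ = ⟪x, C i y⟫)
    (hC0lb : ∀ ξ : W, cs * ‖ξ‖ ^ 2 ≤ ⟪C0 ξ, ξ⟫)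
    (hClb : ∀ i, ∀ ξ : W, cs * ‖ξ‖ ^ 2 ≤ ⟪C i ξ, ξ⟫)
    (hC0ub : ‖C0‖ ≤ cS) (hCub : ∀ i, ‖C i‖ ≤ cS) :
    ∃ c > 0, ∀ (ψ : W) (φ : Fin n → W),
      ⟪-(C0 ((-(η0⁻¹ + ∑ i, (η i)⁻¹)) • C0 ψ + ∑ i, (η i)⁻¹ • C i (φ i))), ψ⟫ +
        ∑ i, ⟪-(C i ((η i)⁻¹ • (C0 ψ - C i (φ i)))), φ i⟫ ≥
      c * (‖ψ‖ ^ 2 + ∑ i, ‖φ i‖ ^ 2) := by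
  set S : ℝ := ∑ i, (η i)⁻¹ with hSdef
  have hS0 : 0 ≤ S := Finset.sum_nonneg fun i _ => (inv_pos.2 (hη i)).le
  set δ : ℝ := 2 * η0 * S + 1 with hδdef
  have hδ0 : (0:ℝ) < δ := by positivity
  set M : ℝ := 1 + ∑ i, η i with hMdef
  have hM0 : (0:ℝ) < M := by
    have : (0:ℝ) ≤ ∑ i, η i := Finset.sum_nonneg fun i _ => (hη i).le
    linarith
  refine ⟨cs ^ 2 * min (η0⁻¹ / 2) (1 / (M * (1 + δ))), by positivity, ?_⟩
  intro ψ φ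
  have e1 : ∀ z : W, ⟪C0 z, ψ⟫ = ⟪z, C0 ψ⟫ := fun z => hC0sym z ψ
  have e2 : ∀ i, ∀ z : W, ⟪C i z, φ i⟫ = ⟪z, C i (φ i)⟫ := fun i z => hCsym i z (φ i)
  have hfirst : ⟪-(C0 ((-(η0⁻¹ + S)) • C0 ψ + ∑ i, (η i)⁻¹ • C i (φ i))), ψ⟫
      = (η0⁻¹ + S) * ⟪C0 ψ, C0 ψ⟫ - ∑ i, (η i)⁻¹ * ⟪C i (φ i), C0 ψ⟫ := by
    rw [inner_neg_left, e1, inner_add_left, real_inner_smul_left, sum_inner]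
    simp only [real_inner_smul_left]
    ring
  have hsum1 : ∀ i, ⟪-(C i ((η i)⁻¹ • (C0 ψ - C i (φ i)))), φ i⟫
      = (η i)⁻¹ * ⟪C i (φ i), C i (φ i)⟫ - (η i)⁻¹ * ⟪C i (φ i), C0 ψ⟫ := by
    intro i
    rw [inner_neg_left, e2 i, real_inner_smul_left, inner_sub_left,
      real_inner_comm (C0 ψ)]
    ring
  have hsum2 : ∀ i, (η i)⁻¹ * ‖C0 ψ - C i (φ i)‖ ^ 2
      = (η i)⁻¹ * ⟪C0 ψ, C0 ψ⟫ - 2 * ((η i)⁻¹ * ⟪C i (φ i), C0 ψ⟫)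
        + (η i)⁻¹ * ⟪C i (φ i), C i (φ i)⟫ := by
    intro i
    rw [← real_inner_self_eq_norm_sq, inner_sub_left, inner_sub_right, inner_sub_right,
      real_inner_comm (C0 ψ) (C i (φ i))]
    ring
  have key :
      ⟪-(C0 ((-(η0⁻¹ + S)) • C0 ψ + ∑ i, (η i)⁻¹ • C i (φ i))), ψ⟫ +
        ∑ i, ⟪-(C i ((η i)⁻¹ • (C0 ψ - C i (φ i)))), φ i⟫ =
      η0⁻¹ * ‖C0 ψ‖ ^ 2 + ∑ i, (η i)⁻¹ * ‖C0 ψ - C i (φ i)‖ ^ 2 := by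
    rw [hfirst, Finset.sum_congr rfl (fun i _ => hsum1 i),
      Finset.sum_congr rfl (fun i _ => hsum2 i), real_inner_self_eq_norm_sq]
    rw [Finset.sum_sub_distrib, Finset.sum_add_distrib, Finset.sum_sub_distrib,
      ← Finset.mul_sum, ← Finset.sum_mul, ← hSdef]
    ring
  rw [key]
  -- lower bounds
  have ha : cs ^ 2 * ‖ψ‖ ^ 2 ≤ ‖C0 ψ‖ ^ 2 := aux_op_lb C0 cs hcs hC0lb ψ
  have hb : ∀ i, cs ^ 2 * ‖φ i‖ ^ 2 ≤ ‖C i (φ i)‖ ^ 2 :=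
    fun i => aux_op_lb (C i) cs hcs (hClb i) (φ i)
  have hterm : ∀ i ∈ Finset.univ, ‖C i (φ i)‖ ^ 2 / (1 + δ) - ‖C0 ψ‖ ^ 2 / δ
      ≤ ‖C0 ψ - C i (φ i)‖ ^ 2 := fun i _ => aux_sub_lb _ _ δ hδ0
  have step1 : ∑ i, ((η i)⁻¹ * (‖C i (φ i)‖ ^ 2 / (1 + δ)) - (η i)⁻¹ * (‖C0 ψ‖ ^ 2 / δ))
      ≤ ∑ i, (η i)⁻¹ * ‖C0 ψ - C i (φ i)‖ ^ 2 := by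
    apply Finset.sum_le_sum
    intro i hi
    have := hterm i hi
    have hpos : (0:ℝ) ≤ (η i)⁻¹ := (inv_pos.2 (hη i)).le
    nlinarith
  have hSδ : S / δ ≤ η0⁻¹ / 2 := by
    rw [div_le_div_iff₀ hδ0 (by norm_num)]
    rw [hδdef]
    rw [inv_mul_eq_div, le_div_iff₀ hη0]
    ring_nf
    nlinarith
  set c := cs ^ 2 * min (η0⁻¹ / 2) (1 / (M * (1 + δ))) with hcdef
  have hc1 : c ≤ cs ^ 2 * (η0⁻¹ / 2) :=
    mul_le_mul_of_nonneg_left (min_le_left _ _) (by positivity)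
  have hc2 : ∀ i, c * ‖φ i‖ ^ 2 ≤ (η i)⁻¹ * (‖C i (φ i)‖ ^ 2 / (1 + δ)) := by
    intro i
    have hηM : η i ≤ M := by
      rw [hMdef]
      have : η i ≤ ∑ j, η j :=
        Finset.single_le_sum (fun j _ => (hη j).le) (Finset.mem_univ i)
      linarith
    have h1 : (M * (1 + δ))⁻¹ ≤ (η i)⁻¹ * (1 + δ)⁻¹ := by
      rw [mul_inv]
      apply mul_le_mul_of_nonneg_right _ (by positivity)
      exact inv_anti₀ (hη i) hηM
    have hcle : c ≤ cs ^ 2 * ((η i)⁻¹ * (1 + δ)⁻¹) := by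
      calc c ≤ cs ^ 2 * (1 / (M * (1 + δ))) :=
            mul_le_mul_of_nonneg_left (min_le_right _ _) (by positivity)
        _ = cs ^ 2 * (M * (1 + δ))⁻¹ := by rw [one_div]
        _ ≤ cs ^ 2 * ((η i)⁻¹ * (1 + δ)⁻¹) :=
            mul_le_mul_of_nonneg_left h1 (by positivity)
    calc c * ‖φ i‖ ^ 2 ≤ cs ^ 2 * ((η i)⁻¹ * (1 + δ)⁻¹) * ‖φ i‖ ^ 2 :=
          mul_le_mul_of_nonneg_right hcle (by positivity)
      _ = (η i)⁻¹ * ((cs ^ 2 * ‖φ i‖ ^ 2) / (1 + δ)) := by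
          field_simp
      _ ≤ (η i)⁻¹ * (‖C i (φ i)‖ ^ 2 / (1 + δ)) := by
          apply mul_le_mul_of_nonneg_left _ (inv_pos.2 (hη i)).le
          exact div_le_div_of_nonneg_right (hb i) (by positivity)
  -- assemble
  have hsum_split : ∑ i, ((η i)⁻¹ * (‖C i (φ i)‖ ^ 2 / (1 + δ)) - (η i)⁻¹ * (‖C0 ψ‖ ^ 2 / δ))
      = (∑ i, (η i)⁻¹ * (‖C i (φ i)‖ ^ 2 / (1 + δ))) - S * (‖C0 ψ‖ ^ 2 / δ) := by
    rw [Finset.sum_sub_distrib, ← Finset.sum_mul, ← hSdef]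
  have hψ : c * ‖ψ‖ ^ 2 ≤ η0⁻¹ * ‖C0 ψ‖ ^ 2 - S * (‖C0 ψ‖ ^ 2 / δ) := by
    have h2 : S * (‖C0 ψ‖ ^ 2 / δ) = (S / δ) * ‖C0 ψ‖ ^ 2 := by ring
    have h3 : (S / δ) * ‖C0 ψ‖ ^ 2 ≤ (η0⁻¹ / 2) * ‖C0 ψ‖ ^ 2 :=
      mul_le_mul_of_nonneg_right hSδ (by positivity)
    have h4 : c * ‖ψ‖ ^ 2 ≤ (η0⁻¹ / 2) * ‖C0 ψ‖ ^ 2 := by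
      calc c * ‖ψ‖ ^ 2 ≤ cs ^ 2 * (η0⁻¹ / 2) * ‖ψ‖ ^ 2 :=
            mul_le_mul_of_nonneg_right hc1 (by positivity)
        _ = (η0⁻¹ / 2) * (cs ^ 2 * ‖ψ‖ ^ 2) := by ring
        _ ≤ (η0⁻¹ / 2) * ‖C0 ψ‖ ^ 2 :=
            mul_le_mul_of_nonneg_left ha (by positivity)
    nlinarith [sq_nonneg ‖C0 ψ‖]
  have hφsum : c * ∑ i, ‖φ i‖ ^ 2 ≤ ∑ i, (η i)⁻¹ * (‖C i (φ i)‖ ^ 2 / (1 + δ)) := by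
    rw [Finset.mul_sum]
    exact Finset.sum_le_sum fun i _ => hc2 i
  have final := step1
  rw [hsum_split] at final
  calc c * (‖ψ‖ ^ 2 + ∑ i, ‖φ i‖ ^ 2)
      = c * ‖ψ‖ ^ 2 + c * ∑ i, ‖φ i‖ ^ 2 := by ring
    _ ≤ (η0⁻¹ * ‖C0 ψ‖ ^ 2 - S * (‖C0 ψ‖ ^ 2 / δ))
        + ∑ i, (η i)⁻¹ * (‖C i (φ i)‖ ^ 2 / (1 + δ)) := add_le_add hψ hφsum
    _ ≤ η0⁻¹ * ‖C0 ψ‖ ^ 2 + ∑ i, (η i)⁻¹ * ‖C0 ψ - C i (φ i)‖ ^ 2 := by linarith
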